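/- Uniqueness for the fluid-limit system (asserted after paper eqs. (3.26)–(3.27)): let k ≥ 1, T > 0, μ_1,…,μ_k > 0 and ϱ_1,…,ϱ_k > 0. Suppose x = (x_1,…,x_k) and y = (y_1,…,y_k) are k-tuples of continuous functions [0,T] → ℝ with x_j(0) = y_j(0) = 0 which both satisfy, for every j = 1,…,k and t ∈ [0,T], the system x_j(t) = ϱ_j μ_j ∫_0^t [ 1 − Σ_{l=1}^k Φ_s(x_l) ] ds − μ_j t (and the same equations for y). Then x_j(t) = y_j(t) for all j and all t ∈ [0,T]. -/

import Mathlib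

open Set MeasureTheory intervalIntegral Finset

/-- The regulator `Ψ_t(X) = −inf_{s∈[0,t]} X(s)` (paper eq. (2.9)). -/
noncomputable def Psi (X : ℝ → ℝ) (t : ℝ) : ℝ := -sInf (X '' Set.Icc 0 t)

/-- The Skorokhod reflection `Φ_t(X) = X(t) + Ψ_t(X)` (paper eq. (2.11)). -/
noncomputable def Phi (X : ℝ → ℝ) (t : ℝ) : ℝ := X t + Psi X t

lemma sInf_image_sub_le {X Y : ℝ → ℝ} {t b : ℝ} (ht : 0 ≤ t)
    (hX : ContinuousOn X (Set.Icc 0 t)) (hY : ContinuousOn Y (Set.Icc 0 t))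
    (hb : ∀ u ∈ Set.Icc 0 t, |X u - Y u| ≤ b) :
    sInf (X '' Set.Icc 0 t) - sInf (Y '' Set.Icc 0 t) ≤ b := by
  have h0 : (0:ℝ) ∈ Set.Icc 0 t := ⟨le_refl 0, ht⟩
  obtain ⟨u₀, hu₀, hmin⟩ := isCompact_Icc.exists_isMinOn ⟨0, h0⟩ hY
  have h1 : sInf (X '' Set.Icc 0 t) ≤ X u₀ :=
    csInf_le (isCompact_Icc.image_of_continuousOn hX).bddBelow ⟨u₀, hu₀, rfl⟩
  have h2 : Y u₀ ≤ sInf (Y '' Set.Icc 0 t) :=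
    le_csInf ⟨Y 0, 0, h0, rfl⟩ (by rintro _ ⟨u, hu, rfl⟩; exact hmin hu)
  have h3 := (abs_le.1 (hb u₀ hu₀)).2
  linarith

lemma psi_lipschitz {X Y : ℝ → ℝ} {t b : ℝ} (ht : 0 ≤ t)
    (hX : ContinuousOn X (Set.Icc 0 t)) (hY : ContinuousOn Y (Set.Icc 0 t))
    (hb : ∀ u ∈ Set.Icc 0 t, |X u - Y u| ≤ b) :
    |Psi X t - Psi Y t| ≤ b := by
  rw [abs_le]
  constructor
  · have := sInf_image_sub_le ht hX hY hb
    simp only [Psi]; linarith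
  · have := sInf_image_sub_le ht hY hX
      (fun u hu => by rw [abs_sub_comm]; exact hb u hu)
    simp only [Psi]; linarith

lemma psi_monotoneOn {X : ℝ → ℝ} {T : ℝ} (hX : ContinuousOn X (Set.Icc 0 T)) :
    MonotoneOn (Psi X) (Set.Icc 0 T) := by
  intro a ha b hb hab
  have hbdd : BddBelow (X '' Set.Icc 0 b) :=
    (isCompact_Icc.image_of_continuousOn (hX.mono (Set.Icc_subset_Icc le_rfl hb.2))).bddBelow
  have : sInf (X '' Set.Icc 0 b) ≤ sInf (X '' Set.Icc 0 a) :=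
    csInf_le_csInf hbdd ⟨X 0, 0, ⟨le_rfl, ha.1⟩, rfl⟩
      (Set.image_mono (Set.Icc_subset_Icc le_rfl hab))
  simpa [Psi] using neg_le_neg this

lemma phi_intervalIntegrable {X : ℝ → ℝ} {T t : ℝ} (ht : t ∈ Set.Icc (0:ℝ) T)
    (hX : ContinuousOn X (Set.Icc 0 T)) :
    IntervalIntegrable (Phi X) volume 0 t := by
  have huIcc : Set.uIcc (0:ℝ) t = Set.Icc 0 t := Set.uIcc_of_le ht.1
  have h1 : IntervalIntegrable X volume 0 t := by
    apply ContinuousOn.intervalIntegrable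
    rw [huIcc]; exact hX.mono (Set.Icc_subset_Icc le_rfl ht.2)
  have h2 : IntervalIntegrable (Psi X) volume 0 t := by
    apply MonotoneOn.intervalIntegrable
    exact (psi_monotoneOn hX).mono (by rw [huIcc]; exact Set.Icc_subset_Icc le_rfl ht.2)
  exact h1.add h2

set_option maxHeartbeats 1000000 in
/-- Uniqueness for the fluid-limit system (asserted after paper eqs. (3.26)–(3.27)). -/
theorem fluid_limit_system_unique
    (k : ℕ) (hk : 1 ≤ k) (T : ℝ) (hT : 0 < T)
    (μ ϱ : Fin k → ℝ) (hμ : ∀ j, 0 < μ j) (hϱ : ∀ j, 0 < ϱ j)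
    (x y : Fin k → ℝ → ℝ)
    (hxc : ∀ j, ContinuousOn (x j) (Set.Icc 0 T))
    (hyc : ∀ j, ContinuousOn (y j) (Set.Icc 0 T))
    (hx0 : ∀ j, x j 0 = 0) (hy0 : ∀ j, y j 0 = 0)
    (hx : ∀ j, ∀ t ∈ Set.Icc (0:ℝ) T,
      x j t = ϱ j * μ j * (∫ s in (0:ℝ)..t, (1 - ∑ l, Phi (x l) s)) - μ j * t)
    (hy : ∀ j, ∀ t ∈ Set.Icc (0:ℝ) T,
      y j t = ϱ j * μ j * (∫ s in (0:ℝ)..t, (1 - ∑ l, Phi (y l) s)) - μ j * t) :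
    ∀ j, ∀ t ∈ Set.Icc (0:ℝ) T, x j t = y j t := by
  classical
  set c : Fin k → ℝ := fun j => ϱ j * μ j with hc
  have hcpos : ∀ j, 0 < c j := fun j => mul_pos (hϱ j) (hμ j)
  -- a uniform bound on |x j - y j|
  have hbound : ∀ j, ∃ M : ℝ, ∀ t ∈ Set.Icc (0:ℝ) T, |x j t - y j t| ≤ M := by
    intro j
    obtain ⟨M, hM⟩ := isCompact_Icc.exists_bound_of_continuousOn ((hxc j).sub (hyc j))
    exact ⟨M, fun t ht => hM t ht⟩
  choose M hM using hbound
  set C : ℝ := ∑ l, |M l| with hCdef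
  have hCnn : 0 ≤ C := Finset.sum_nonneg fun l _ => abs_nonneg _
  have hMC : ∀ j, M j ≤ C := fun j =>
    le_trans (le_abs_self _)
      (Finset.single_le_sum (fun l _ => abs_nonneg (M l)) (Finset.mem_univ j))
  set K : ℝ := 2 * k * ∑ l, c l with hKdef
  have hKnn : 0 ≤ K := by
    apply mul_nonneg (by positivity)
    exact Finset.sum_nonneg fun l _ => (hcpos l).le
  have hcK : ∀ j, 2 * k * c j ≤ K := by
    intro j
    have h1 : c j ≤ ∑ l, c l :=
      Finset.single_le_sum (fun l _ => (hcpos l).le) (Finset.mem_univ j)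
    have hk' : (1:ℝ) ≤ (k:ℝ) := by exact_mod_cast hk
    nlinarith
  -- main induction
  have hind : ∀ n : ℕ, ∀ j, ∀ t ∈ Set.Icc (0:ℝ) T,
      |x j t - y j t| ≤ C * (K * t) ^ n / n.factorial := by
    intro n
    induction n with
    | zero =>
      intro j t ht
      simpa using le_trans (hM j t ht) (hMC j)
    | succ n ih =>
      intro j t ht
      -- integrability
      have hfint : IntervalIntegrable (fun s => ∑ l, Phi (x l) s) volume 0 t := by
        have h := IntervalIntegrable.sum (μ := volume) (a := (0:ℝ)) (b := t)
          (f := fun l => Phi (x l)) Finset.univ (fun l _ => phi_intervalIntegrable ht (hxc l))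
        have heq : (fun s => ∑ l, Phi (x l) s) = ∑ l : Fin k, Phi (x l) := by
          funext s; simp
        rw [heq]; exact h
      have hgint : IntervalIntegrable (fun s => ∑ l, Phi (y l) s) volume 0 t := by
        have h := IntervalIntegrable.sum (μ := volume) (a := (0:ℝ)) (b := t)
          (f := fun l => Phi (y l)) Finset.univ (fun l _ => phi_intervalIntegrable ht (hyc l))
        have heq : (fun s => ∑ l, Phi (y l) s) = ∑ l : Fin k, Phi (y l) := by
          funext s; simp
        rw [heq]; exact h
      -- the difference formula
      have hdiff : x j t - y j t
          = c j * ∫ s in (0:ℝ)..t, (∑ l, Phi (y l) s - ∑ l, Phi (x l) s) := by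
        rw [hx j t ht, hy j t ht]
        rw [intervalIntegral.integral_sub hgint hfint]
        rw [intervalIntegral.integral_sub (intervalIntegrable_const) hfint,
            intervalIntegral.integral_sub (intervalIntegrable_const) hgint]
        ring
      -- pointwise bound on the integrand
      have hptw : ∀ s ∈ Set.Icc (0:ℝ) t,
          |∑ l, Phi (y l) s - ∑ l, Phi (x l) s|
            ≤ (2 * k * C * K ^ n / n.factorial) * s ^ n := by
        intro s hs
        have hsT : s ∈ Set.Icc (0:ℝ) T := ⟨hs.1, le_trans hs.2 ht.2⟩
        have hterm : ∀ l, |Phi (y l) s - Phi (x l) s|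
            ≤ 2 * (C * (K * s) ^ n / n.factorial) := by
          intro l
          have hb : ∀ u ∈ Set.Icc (0:ℝ) s, |x l u - y l u|
              ≤ C * (K * s) ^ n / n.factorial := by
            intro u hu
            have huT : u ∈ Set.Icc (0:ℝ) T := ⟨hu.1, le_trans hu.2 hsT.2⟩
            refine le_trans (ih l u huT) ?_
            have hpow : (K * u) ^ n ≤ (K * s) ^ n :=
              pow_le_pow_left₀ (mul_nonneg hKnn hu.1)
                (mul_le_mul_of_nonneg_left hu.2 hKnn) n
            have hfac : (0:ℝ) ≤ n.factorial := by positivity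
            exact div_le_div_of_nonneg_right (mul_le_mul_of_nonneg_left hpow hCnn) hfac
          have hpsib : |Psi (y l) s - Psi (x l) s| ≤ C * (K * s) ^ n / n.factorial := by
            apply psi_lipschitz hs.1
              ((hyc l).mono (Set.Icc_subset_Icc le_rfl hsT.2))
              ((hxc l).mono (Set.Icc_subset_Icc le_rfl hsT.2))
            intro u hu
            rw [abs_sub_comm]
            exact hb u hu
          have hxyb : |y l s - x l s| ≤ C * (K * s) ^ n / n.factorial := by
            rw [abs_sub_comm]
            exact hb s ⟨hs.1, le_rfl⟩
          have : Phi (y l) s - Phi (x l) s = (y l s - x l s) + (Psi (y l) s - Psi (x l) s) := by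
            simp [Phi]; ring
          rw [this]
          calc |(y l s - x l s) + (Psi (y l) s - Psi (x l) s)|
              ≤ |y l s - x l s| + |Psi (y l) s - Psi (x l) s| := abs_add_le _ _
            _ ≤ 2 * (C * (K * s) ^ n / n.factorial) := by linarith
        calc |∑ l, Phi (y l) s - ∑ l, Phi (x l) s|
            = |∑ l, (Phi (y l) s - Phi (x l) s)| := by rw [Finset.sum_sub_distrib]
          _ ≤ ∑ l, |Phi (y l) s - Phi (x l) s| := Finset.abs_sum_le_sum_abs _ _
          _ ≤ ∑ _l : Fin k, 2 * (C * (K * s) ^ n / n.factorial) :=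
              Finset.sum_le_sum fun l _ => hterm l
          _ = (2 * k * C * K ^ n / n.factorial) * s ^ n := by
              simp [Finset.sum_const, mul_pow]; ring
      -- integral bound
      have hintle : |∫ s in (0:ℝ)..t, (∑ l, Phi (y l) s - ∑ l, Phi (x l) s)|
          ≤ (2 * k * C * K ^ n / n.factorial) * (t ^ (n + 1) / (n + 1)) := by
        have h1 := intervalIntegral.abs_integral_le_integral_abs (μ := volume)
          (f := fun s => ∑ l, Phi (y l) s - ∑ l, Phi (x l) s) ht.1
        refine le_trans h1 ?_
        have h2 : (∫ s in (0:ℝ)..t, |∑ l, Phi (y l) s - ∑ l, Phi (x l) s|)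
            ≤ ∫ s in (0:ℝ)..t, (2 * k * C * K ^ n / n.factorial) * s ^ n := by
          apply intervalIntegral.integral_mono_on ht.1 ((hgint.sub hfint).abs)
          · exact ((continuous_const.mul (continuous_pow n)).continuousOn).intervalIntegrable
          · exact hptw
        refine le_trans h2 ?_
        rw [intervalIntegral.integral_const_mul, integral_pow]
        simp
      -- conclude
      rw [hdiff, abs_mul, abs_of_pos (hcpos j)]
      have hle : c j * |∫ s in (0:ℝ)..t, (∑ l, Phi (y l) s - ∑ l, Phi (x l) s)|
          ≤ c j * ((2 * k * C * K ^ n / n.factorial) * (t ^ (n + 1) / (n + 1))) :=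
        mul_le_mul_of_nonneg_left hintle (hcpos j).le
      refine le_trans hle ?_
      have hfact : ((n + 1).factorial : ℝ) = (n + 1) * n.factorial := by
        push_cast [Nat.factorial_succ]; ring
      have hexpand : C * (K * t) ^ (n + 1) / (n + 1).factorial
          = K * (C * K ^ n * t ^ (n + 1) / (n.factorial * (n + 1))) := by
        rw [hfact, mul_pow]; field_simp; ring
      have hlhs : c j * ((2 * k * C * K ^ n / n.factorial) * (t ^ (n + 1) / (n + 1)))
          = (2 * k * c j) * (C * K ^ n * t ^ (n + 1) / (n.factorial * (n + 1))) := by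
        field_simp
      rw [hlhs, hexpand]
      apply mul_le_mul_of_nonneg_right (hcK j)
      have htn : (0:ℝ) ≤ t ^ (n + 1) := pow_nonneg ht.1 _
      have hnum : (0:ℝ) ≤ C * K ^ n * t ^ (n + 1) :=
        mul_nonneg (mul_nonneg hCnn (pow_nonneg hKnn n)) htn
      exact div_nonneg hnum (by positivity)
  -- take the limit n → ∞
  intro j t ht
  have hlim : Filter.Tendsto (fun n : ℕ => C * (K * T) ^ n / n.factorial)
      Filter.atTop (nhds 0) := by
    have h := FloorSemiring.tendsto_pow_div_factorial_atTop (K * T) (K := ℝ)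
    have := h.const_mul C
    simpa [mul_div_assoc] using this
  have hbd : ∀ n : ℕ, |x j t - y j t| ≤ C * (K * T) ^ n / n.factorial := by
    intro n
    refine le_trans (hind n j t ht) ?_
    have hpow : (K * t) ^ n ≤ (K * T) ^ n :=
      pow_le_pow_left₀ (mul_nonneg hKnn ht.1) (mul_le_mul_of_nonneg_left ht.2 hKnn) n
    have hfac : (0:ℝ) ≤ n.factorial := by positivity
    exact div_le_div_of_nonneg_right (mul_le_mul_of_nonneg_left hpow hCnn) hfac
  have : |x j t - y j t| ≤ 0 := ge_of_tendsto' hlim hbd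
  have h0 : |x j t - y j t| = 0 := le_antisymm this (abs_nonneg _)
  have := abs_eq_zero.mp h0
  linarith
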